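/- (Quasirationality of scl along a bounded family, abstract polyhedral version.) Let K(n) ⊂ ℝ^d be a family of polyhedral cones whose extremal rays are spanned by vectors with integral linear coordinates in n, let κ_n : K(n) → ℝ be the function linear on rays, equal to 1 on the boundary of conv(D(n) + K(n)) where D(n) is the set of integer points in specified open faces of K(n), and suppose the vertices of this 'sail' are given for n ≫ 0 (after passing to a residue class mod some π) by integer polynomial vectors. Then for a fixed rational linear functional L and fixed rational vector w(n) with integral linear coordinates in K(n), the minimum over the fiber {y ∈ K(n) : d(y) = w(n)} (for a fixed rational linear map d) of κ_n(y) − L(y) is, for all sufficiently large n in each residue class mod some period, a ratio of two integer polynomials in n; i.e., the minimum is a quasirational function of n. -/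

import Mathlib

/-- `p` is an integral quasipolynomial. -/
def IsQuasiPoly (p : ℕ → ℤ) : Prop :=
  ∃ π : ℕ, 0 < π ∧ ∃ P : ℕ → Polynomial ℤ, ∀ n : ℕ, p n = (P (n % π)).eval (n : ℤ)

/-- `f : ℕ → ℝ` is eventually quasirational: a ratio of two integral
quasipolynomials for all sufficiently large `n`. -/
def IsEventuallyQR (f : ℕ → ℝ) : Prop :=
  ∃ p q : ℕ → ℤ, IsQuasiPoly p ∧ IsQuasiPoly q ∧ ∃ N : ℕ, ∀ n ≥ N,
    ((q n : ℝ) ≠ 0 ∧ f n = (p n : ℝ) / (q n : ℝ))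


/-- `f` is, on each residue class mod `T`, eventually a ratio of integer polynomials. -/
def PCRW (T : ℕ) (f : ℕ → ℝ) : Prop :=
  ∀ b : ℕ, ∃ (P Q : Polynomial ℤ) (N : ℕ), ∀ n : ℕ, N ≤ n → n % T = b →
    (((Q.eval (n : ℤ) : ℤ) : ℝ) ≠ 0 ∧
      f n = ((P.eval (n : ℤ) : ℤ) : ℝ) / ((Q.eval (n : ℤ) : ℤ) : ℝ))

def PCR (f : ℕ → ℝ) : Prop := ∃ T : ℕ, 0 < T ∧ PCRW T f

theorem PCRW.mono {T T' : ℕ} {f : ℕ → ℝ} (h : PCRW T f) (hd : T ∣ T') : PCRW T' f := by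
  unfold PCRW at *
  intro b
  obtain ⟨P, Q, N, hPQ⟩ := h (b % T)
  exact ⟨P, Q, N, fun n hn hb => hPQ n hn (by rw [← hb, Nat.mod_mod_of_dvd _ hd])⟩

theorem PCRW.add {T : ℕ} {f g : ℕ → ℝ} (hf : PCRW T f) (hg : PCRW T g) :
    PCRW T (fun n => f n + g n) := by
  unfold PCRW at *
  intro b
  obtain ⟨P1, Q1, N1, h1⟩ := hf b
  obtain ⟨P2, Q2, N2, h2⟩ := hg b
  refine ⟨P1 * Q2 + P2 * Q1, Q1 * Q2, max N1 N2, fun n hn hb => ?_⟩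
  obtain ⟨hq1, hf1⟩ := h1 n (le_trans (le_max_left _ _) hn) hb
  obtain ⟨hq2, hf2⟩ := h2 n (le_trans (le_max_right _ _) hn) hb
  simp only [Polynomial.eval_mul, Polynomial.eval_add, Int.cast_mul, Int.cast_add]
  constructor
  · exact mul_ne_zero hq1 hq2
  · show f n + g n = _
    rw [hf1, hf2]; field_simp

theorem PCRW.mul {T : ℕ} {f g : ℕ → ℝ} (hf : PCRW T f) (hg : PCRW T g) :
    PCRW T (fun n => f n * g n) := by
  unfold PCRW at *
  intro b
  obtain ⟨P1, Q1, N1, h1⟩ := hf b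
  obtain ⟨P2, Q2, N2, h2⟩ := hg b
  refine ⟨P1 * P2, Q1 * Q2, max N1 N2, fun n hn hb => ?_⟩
  obtain ⟨hq1, hf1⟩ := h1 n (le_trans (le_max_left _ _) hn) hb
  obtain ⟨hq2, hf2⟩ := h2 n (le_trans (le_max_right _ _) hn) hb
  simp only [Polynomial.eval_mul, Int.cast_mul]
  constructor
  · exact mul_ne_zero hq1 hq2
  · show f n * g n = _
    rw [hf1, hf2]; field_simp

theorem PCRW.neg {T : ℕ} {f : ℕ → ℝ} (hf : PCRW T f) : PCRW T (fun n => -f n) := by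
  unfold PCRW at *
  intro b
  obtain ⟨P1, Q1, N1, h1⟩ := hf b
  refine ⟨-P1, Q1, N1, fun n hn hb => ?_⟩
  obtain ⟨hq1, hf1⟩ := h1 n hn hb
  refine ⟨hq1, ?_⟩
  show -f n = _
  rw [hf1]
  simp only [Polynomial.eval_neg, Int.cast_neg]
  ring

theorem PCR.congr {f g : ℕ → ℝ} (h : ∀ n, f n = g n) (hf : PCR f) : PCR g := by
  obtain ⟨T, hT, hf⟩ := hf
  refine ⟨T, hT, fun b => ?_⟩
  obtain ⟨P, Q, N, hPQ⟩ := hf b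
  exact ⟨P, Q, N, fun n hn hb => (h n) ▸ hPQ n hn hb⟩

theorem PCR.add {f g : ℕ → ℝ} (hf : PCR f) (hg : PCR g) : PCR (fun n => f n + g n) := by
  obtain ⟨T1, hT1, hf⟩ := hf
  obtain ⟨T2, hT2, hg⟩ := hg
  exact ⟨T1 * T2, Nat.mul_pos hT1 hT2,
    (hf.mono (dvd_mul_right _ _)).add (hg.mono (dvd_mul_left _ _))⟩

theorem PCR.mul {f g : ℕ → ℝ} (hf : PCR f) (hg : PCR g) : PCR (fun n => f n * g n) := by
  obtain ⟨T1, hT1, hf⟩ := hf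
  obtain ⟨T2, hT2, hg⟩ := hg
  exact ⟨T1 * T2, Nat.mul_pos hT1 hT2,
    (hf.mono (dvd_mul_right _ _)).mul (hg.mono (dvd_mul_left _ _))⟩

theorem PCR.neg {f : ℕ → ℝ} (hf : PCR f) : PCR (fun n => -f n) := by
  obtain ⟨T1, hT1, hf⟩ := hf
  exact ⟨T1, hT1, hf.neg⟩

theorem PCR.sub {f g : ℕ → ℝ} (hf : PCR f) (hg : PCR g) : PCR (fun n => f n - g n) :=
  (hf.add hg.neg).congr (fun n => by ring)

theorem PCR_const (a : ℝ) (ha : ∃ q : ℚ, (q : ℝ) = a) : PCR (fun _ => a) := by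
  obtain ⟨q, rfl⟩ := ha
  refine ⟨1, one_pos, fun b => ⟨Polynomial.C q.num, Polynomial.C (q.den : ℤ), 0,
    fun n _ _ => ?_⟩⟩
  simp only [Polynomial.eval_C]
  constructor
  · push_cast
    exact_mod_cast q.den_nz
  · rw [Rat.cast_def]; push_cast; ring_nf

theorem PCR_int (a : ℤ) : PCR (fun _ => (a : ℝ)) :=
  PCR_const _ ⟨(a : ℚ), by push_cast; ring⟩

theorem PCR_zero : PCR (fun _ => (0 : ℝ)) := by simpa using PCR_int 0

theorem PCR_one : PCR (fun _ => (1 : ℝ)) := by simpa using PCR_int 1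

theorem PCR_linear (a b : ℤ) : PCR (fun n => (a : ℝ) * n + (b : ℝ)) := by
  refine ⟨1, one_pos, fun c => ⟨Polynomial.C a * Polynomial.X + Polynomial.C b, 1, 0,
    fun n _ _ => ?_⟩⟩
  simp only [Polynomial.eval_add, Polynomial.eval_mul, Polynomial.eval_C, Polynomial.eval_X,
    Polynomial.eval_one]
  norm_num

theorem PCR_sum {ι : Type*} (s : Finset ι) (f : ι → ℕ → ℝ) (h : ∀ i ∈ s, PCR (f i)) :
    PCR (fun n => ∑ i ∈ s, f i n) := by
  classical
  induction s using Finset.induction_on with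
  | empty => exact PCR_zero.congr (fun n => by simp)
  | @insert a s hni ih =>
    have := (h a (Finset.mem_insert_self a s)).add
      (ih (fun i hi => h i (Finset.mem_insert_of_mem hi)))
    exact this.congr (fun n => by rw [Finset.sum_insert hni])

theorem PCR_prod {ι : Type*} (s : Finset ι) (f : ι → ℕ → ℝ) (h : ∀ i ∈ s, PCR (f i)) :
    PCR (fun n => ∏ i ∈ s, f i n) := by
  classical
  induction s using Finset.induction_on with
  | empty => exact PCR_one.congr (fun n => by simp)
  | @insert a s hni ih =>
    have := (h a (Finset.mem_insert_self a s)).mul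
      (ih (fun i hi => h i (Finset.mem_insert_of_mem hi)))
    exact this.congr (fun n => by rw [Finset.prod_insert hni])
theorem eval_cast_eq (P : Polynomial ℤ) (n : ℕ) :
    (P.map (Int.castRingHom ℝ)).eval ((n : ℕ) : ℝ) = ((P.eval (n : ℤ) : ℤ) : ℝ) := by
  rw [Polynomial.eval_map, show ((n : ℕ) : ℝ) = (((n : ℤ) : ℤ) : ℝ) by push_cast; ring,
    Polynomial.eval₂_at_intCast]
  simp

/-- A nonzero integer polynomial is eventually nonzero at natural arguments. -/
theorem int_poly_eventually_ne {P : Polynomial ℤ} (hP : P ≠ 0) :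
    ∃ N : ℕ, ∀ n : ℕ, N ≤ n → P.eval (n : ℤ) ≠ 0 := by
  obtain ⟨M, hM⟩ := (Polynomial.finite_setOf_isRoot hP).bddAbove
  refine ⟨M.toNat + 1, fun n hn h0 => ?_⟩
  have h1 : (n : ℤ) ≤ M := hM (by exact h0)
  have h2 : M ≤ (M.toNat : ℤ) := Int.self_le_toNat M
  omega

/-- An integer polynomial with positive leading coefficient is eventually positive. -/
theorem int_poly_eventually_pos {P : Polynomial ℤ} (hP : 0 < P.leadingCoeff) :
    ∃ N : ℕ, ∀ n : ℕ, N ≤ n → 0 < P.eval (n : ℤ) := by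
  have hP0 : P ≠ 0 := fun h => by simp [h] at hP
  by_cases hdeg : P.degree ≤ 0
  · refine ⟨0, fun n _ => ?_⟩
    have hC := Polynomial.eq_C_of_degree_le_zero hdeg
    rw [hC, Polynomial.eval_C]
    have : P.leadingCoeff = P.coeff 0 := by
      rw [Polynomial.leadingCoeff, Polynomial.natDegree_le_iff_degree_le.2 hdeg |> Nat.le_zero.1]
    omega
  · push_neg at hdeg
    set Q : Polynomial ℝ := P.map (Int.castRingHom ℝ) with hQ
    have hinj : Function.Injective (Int.castRingHom ℝ) := Int.cast_injective
    have hd : 0 < Q.degree := by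
      rw [hQ, Polynomial.degree_map_eq_of_injective hinj]; exact hdeg
    have hlc : 0 ≤ Q.leadingCoeff := by
      rw [hQ, Polynomial.leadingCoeff_map_of_injective hinj]
      simp only [Int.coe_castRingHom]
      exact_mod_cast hP.le
    have ht := (Q.tendsto_atTop_of_leadingCoeff_nonneg hd hlc).comp
      (tendsto_natCast_atTop_atTop (R := ℝ))
    have := ht.eventually_gt_atTop 0
    obtain ⟨N, hN⟩ := Filter.eventually_atTop.1 this
    refine ⟨N, fun n hn => ?_⟩
    have := hN n hn
    simp only [Function.comp_apply] at this
    rw [eval_cast_eq] at this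
    exact_mod_cast this

/-- Eventual sign trichotomy for integer polynomials at natural arguments. -/
theorem int_poly_sign (P : Polynomial ℤ) :
    ∃ N : ℕ, (∀ n : ℕ, N ≤ n → 0 < P.eval (n : ℤ)) ∨ (∀ n : ℕ, N ≤ n → P.eval (n : ℤ) = 0) ∨
      (∀ n : ℕ, N ≤ n → P.eval (n : ℤ) < 0) := by
  by_cases h0 : P = 0
  · exact ⟨0, Or.inr (Or.inl (fun n _ => by simp [h0]))⟩
  rcases lt_trichotomy P.leadingCoeff 0 with hneg | hzero | hpos
  · obtain ⟨N, hN⟩ := int_poly_eventually_pos (P := -P) (by simpa using hneg)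
    exact ⟨N, Or.inr (Or.inr (fun n hn => by have := hN n hn; simp at this; omega))⟩
  · exact absurd (Polynomial.leadingCoeff_eq_zero.1 hzero) h0
  · obtain ⟨N, hN⟩ := int_poly_eventually_pos hpos
    exact ⟨N, Or.inl hN⟩
theorem PCR.div {f g : ℕ → ℝ} (hf : PCR f) (hg : PCR g) : PCR (fun n => f n / g n) := by
  obtain ⟨T1, hT1, hf⟩ := hf
  obtain ⟨T2, hT2, hg⟩ := hg
  refine ⟨T1 * T2, Nat.mul_pos hT1 hT2, fun b => ?_⟩
  obtain ⟨Pf, Qf, Nf, h1⟩ := hf.mono (dvd_mul_right T1 T2) b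
  obtain ⟨Pg, Qg, Ng, h2⟩ := hg.mono (dvd_mul_left T2 T1) b
  by_cases hPg : Pg = 0
  · refine ⟨0, 1, Ng, fun n hn hb => ?_⟩
    obtain ⟨hq2, hg2⟩ := h2 n hn hb
    have hg0 : g n = 0 := by rw [hg2, hPg]; simp
    simp [hg0]
  · obtain ⟨Nz, hNz⟩ := int_poly_eventually_ne hPg
    refine ⟨Pf * Qg, Qf * Pg, Nf ⊔ Ng ⊔ Nz, fun n hn hb => ?_⟩
    obtain ⟨hq1, hf1⟩ := h1 n (by omega) hb
    obtain ⟨hq2, hg2⟩ := h2 n (by omega) hb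
    have hpg : ((Pg.eval (n : ℤ) : ℤ) : ℝ) ≠ 0 := Int.cast_ne_zero.2 (hNz n (by omega))
    simp only [Polynomial.eval_mul, Int.cast_mul]
    refine ⟨mul_ne_zero hq1 hpg, ?_⟩
    show f n / g n = _
    rw [hf1, hg2]
    field_simp

/-- Eventual sign trichotomy on residue classes for a `PCR` function. -/
theorem PCR.tri {f : ℕ → ℝ} (hf : PCR f) :
    ∃ T : ℕ, 0 < T ∧ ∀ b : ℕ,
      (∃ N, ∀ n, N ≤ n → n % T = b → 0 < f n) ∨
      (∃ N, ∀ n, N ≤ n → n % T = b → f n = 0) ∨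
      (∃ N, ∀ n, N ≤ n → n % T = b → f n < 0) := by
  obtain ⟨T, hT, hf⟩ := hf
  refine ⟨T, hT, fun b => ?_⟩
  by_cases hbT : T ≤ b
  · exact Or.inl ⟨0, fun n _ hb => absurd hb (by have := Nat.mod_lt n hT; omega)⟩
  push_neg at hbT
  obtain ⟨P, Q, N, h⟩ := hf b
  obtain ⟨NP, hP⟩ := int_poly_sign P
  obtain ⟨NQ, hQ⟩ := int_poly_sign Q
  -- `Q` cannot be eventually zero on a nonempty-at-infinity class
  have hQne : ¬(∀ n : ℕ, NQ ≤ n → Q.eval (n : ℤ) = 0) := by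
    intro hz
    set k := N ⊔ NQ with hk
    set n := b + T * (k + 1) with hn
    have hnb : n % T = b := by
      rw [hn, Nat.add_mul_mod_self_left, Nat.mod_eq_of_lt hbT]
    have hnk : k ≤ n := by
      have : k + 1 ≤ T * (k + 1) := Nat.le_mul_of_pos_left _ hT
      omega
    have := (h n (by omega) hnb).1
    exact this (by exact_mod_cast (hz n (by omega)))
  -- case analysis on sign of P and Q
  rcases hP with hPp | hP0 | hPn
  · rcases hQ with hQp | hQ0 | hQn
    · refine Or.inl ⟨N ⊔ NP ⊔ NQ, fun n hn hb => ?_⟩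
      rw [(h n (by omega) hb).2]
      exact div_pos (by exact_mod_cast hPp n (by omega)) (by exact_mod_cast hQp n (by omega))
    · exact absurd hQ0 hQne
    · refine Or.inr (Or.inr ⟨N ⊔ NP ⊔ NQ, fun n hn hb => ?_⟩)
      rw [(h n (by omega) hb).2]
      exact div_neg_of_pos_of_neg (by exact_mod_cast hPp n (by omega))
        (by exact_mod_cast hQn n (by omega))
  · refine Or.inr (Or.inl ⟨N ⊔ NP, fun n hn hb => ?_⟩)
    rw [(h n (by omega) hb).2]
    have : P.eval (n : ℤ) = 0 := hP0 n (by omega)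
    rw [this]
    simp
  · rcases hQ with hQp | hQ0 | hQn
    · refine Or.inr (Or.inr ⟨N ⊔ NP ⊔ NQ, fun n hn hb => ?_⟩)
      rw [(h n (by omega) hb).2]
      exact div_neg_of_neg_of_pos (by exact_mod_cast hPn n (by omega))
        (by exact_mod_cast hQp n (by omega))
    · exact absurd hQ0 hQne
    · refine Or.inl ⟨N ⊔ NP ⊔ NQ, fun n hn hb => ?_⟩
      rw [(h n (by omega) hb).2]
      exact div_pos_of_neg_of_neg (by exact_mod_cast hPn n (by omega))
        (by exact_mod_cast hQn n (by omega))

/-- Eventually constant truth value on residue classes mod `T`. -/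
def EvCW (T : ℕ) (A : ℕ → Prop) : Prop :=
  ∀ b : ℕ, (∃ N, ∀ n, N ≤ n → n % T = b → A n) ∨ (∃ N, ∀ n, N ≤ n → n % T = b → ¬ A n)

def EvC (A : ℕ → Prop) : Prop := ∃ T : ℕ, 0 < T ∧ EvCW T A

theorem EvCW.mono {T T' : ℕ} {A : ℕ → Prop} (h : EvCW T A) (hd : T ∣ T') : EvCW T' A := by
  unfold EvCW at *
  intro b
  rcases h (b % T) with ⟨N, hN⟩ | ⟨N, hN⟩
  · exact Or.inl ⟨N, fun n hn hb => hN n hn (by rw [← hb, Nat.mod_mod_of_dvd _ hd])⟩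
  · exact Or.inr ⟨N, fun n hn hb => hN n hn (by rw [← hb, Nat.mod_mod_of_dvd _ hd])⟩

theorem EvC.congr {A B : ℕ → Prop} (h : ∀ n, A n ↔ B n) (hA : EvC A) : EvC B := by
  obtain ⟨T, hT, hA⟩ := hA
  refine ⟨T, hT, fun b => ?_⟩
  rcases hA b with ⟨N, hN⟩ | ⟨N, hN⟩
  · exact Or.inl ⟨N, fun n hn hb => (h n).1 (hN n hn hb)⟩
  · exact Or.inr ⟨N, fun n hn hb => fun hB => hN n hn hb ((h n).2 hB)⟩

theorem EvC_true : EvC (fun _ => True) := ⟨1, one_pos, fun _ => Or.inl ⟨0, fun _ _ _ => trivial⟩⟩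

theorem EvC.and {A B : ℕ → Prop} (hA : EvC A) (hB : EvC B) : EvC (fun n => A n ∧ B n) := by
  obtain ⟨T1, hT1, hA⟩ := hA
  obtain ⟨T2, hT2, hB⟩ := hB
  refine ⟨T1 * T2, Nat.mul_pos hT1 hT2, fun b => ?_⟩
  rcases (hA.mono (dvd_mul_right T1 T2)) b with ⟨N1, h1⟩ | ⟨N1, h1⟩
  · rcases (hB.mono (dvd_mul_left T2 T1)) b with ⟨N2, h2⟩ | ⟨N2, h2⟩
    · exact Or.inl ⟨N1 ⊔ N2, fun n hn hb => ⟨h1 n (by omega) hb, h2 n (by omega) hb⟩⟩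
    · exact Or.inr ⟨N2, fun n hn hb hAB => h2 n hn hb hAB.2⟩
  · exact Or.inr ⟨N1, fun n hn hb hAB => h1 n hn hb hAB.1⟩

theorem EvC_all {ι : Type*} (s : Finset ι) (A : ι → ℕ → Prop) (h : ∀ i ∈ s, EvC (A i)) :
    EvC (fun n => ∀ i ∈ s, A i n) := by
  classical
  induction s using Finset.induction_on with
  | empty => exact EvC_true.congr (fun n => by simp)
  | @insert a s hni ih =>
    have := ((h a (Finset.mem_insert_self a s)).and
      (ih (fun i hi => h i (Finset.mem_insert_of_mem hi))))
    exact this.congr (fun n => by rw [Finset.forall_mem_insert])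

theorem PCR.evc_nonneg {f : ℕ → ℝ} (hf : PCR f) : EvC (fun n => 0 ≤ f n) := by
  obtain ⟨T, hT, h⟩ := hf.tri
  refine ⟨T, hT, fun b => ?_⟩
  rcases h b with ⟨N, hN⟩ | ⟨N, hN⟩ | ⟨N, hN⟩
  · exact Or.inl ⟨N, fun n hn hb => (hN n hn hb).le⟩
  · exact Or.inl ⟨N, fun n hn hb => (hN n hn hb).ge⟩
  · exact Or.inr ⟨N, fun n hn hb => not_le.2 (hN n hn hb)⟩

theorem PCR.evc_eq_zero {f : ℕ → ℝ} (hf : PCR f) : EvC (fun n => f n = 0) := by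
  obtain ⟨T, hT, h⟩ := hf.tri
  refine ⟨T, hT, fun b => ?_⟩
  rcases h b with ⟨N, hN⟩ | ⟨N, hN⟩ | ⟨N, hN⟩
  · exact Or.inr ⟨N, fun n hn hb => (hN n hn hb).ne'⟩
  · exact Or.inl ⟨N, hN⟩
  · exact Or.inr ⟨N, fun n hn hb => (hN n hn hb).ne⟩

theorem PCR.evc_ne_zero {f : ℕ → ℝ} (hf : PCR f) : EvC (fun n => f n ≠ 0) := by
  obtain ⟨T, hT, h⟩ := hf.tri
  refine ⟨T, hT, fun b => ?_⟩
  rcases h b with ⟨N, hN⟩ | ⟨N, hN⟩ | ⟨N, hN⟩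
  · exact Or.inl ⟨N, fun n hn hb => (hN n hn hb).ne'⟩
  · exact Or.inr ⟨N, fun n hn hb hne => hne (hN n hn hb)⟩
  · exact Or.inl ⟨N, fun n hn hb => (hN n hn hb).ne⟩

theorem PCR.evc_le {f g : ℕ → ℝ} (hf : PCR f) (hg : PCR g) : EvC (fun n => f n ≤ g n) :=
  (hg.sub hf).evc_nonneg.congr (fun n => sub_nonneg)
theorem exists_rel_min {ι : Type*} (rel : ι → ι → Prop)
    (htot : ∀ i j, rel i j ∨ rel j i)
    (htrans : ∀ {i j k}, rel i j → rel j k → rel i k) :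
    ∀ s : Finset ι, s.Nonempty → ∃ i ∈ s, ∀ j ∈ s, rel i j := by
  classical
  intro s
  induction s using Finset.induction_on with
  | empty => exact fun hs => absurd hs (by simp)
  | @insert a s ha ih =>
    intro _
    by_cases hse : s.Nonempty
    · obtain ⟨i, his, hmin⟩ := ih hse
      rcases htot i a with h | h
      · refine ⟨i, Finset.mem_insert_of_mem his, fun j hj => ?_⟩
        rcases Finset.mem_insert.1 hj with rfl | hj
        · exact h
        · exact hmin j hj
      · refine ⟨a, Finset.mem_insert_self a s, fun j hj => ?_⟩
        rcases Finset.mem_insert.1 hj with rfl | hj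
        · exact (htot j j).elim id id
        · exact htrans h (hmin j hj)
    · rw [Finset.not_nonempty_iff_eq_empty] at hse
      subst hse
      exact ⟨a, Finset.mem_insert_self a _, fun j hj => by
        rcases Finset.mem_insert.1 hj with rfl | hj
        · exact (htot j j).elim id id
        · exact absurd hj (by simp)⟩

/-- Master selection lemma: the pointwise minimum of finitely many `PCR` candidate values
over an eventually-periodic feasible family is `PCR`. -/
theorem master_min {ι : Type*} [Fintype ι] (vals : ι → ℕ → ℝ) (feas : ι → ℕ → Prop)
    (hv : ∀ i, PCR (vals i)) (hfe : ∀ i, EvC (feas i)) (μ : ℕ → ℝ) (N₀ : ℕ)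
    (hmem : ∀ n, N₀ ≤ n → ∃ i, feas i n ∧ μ n = vals i n)
    (hlb : ∀ n, N₀ ≤ n → ∀ i, feas i n → μ n ≤ vals i n) : PCR μ := by
  classical
  choose Tv hTv hv' using hv
  choose Tf hTf hf' using hfe
  have hle : ∀ p : ι × ι, EvC (fun n => vals p.1 n ≤ vals p.2 n) := fun p =>
    PCR.evc_le ⟨Tv p.1, hTv p.1, hv' p.1⟩ ⟨Tv p.2, hTv p.2, hv' p.2⟩
  choose Tle hTle hle' using hle
  set A := ∏ i, Tv i with hA
  set B := ∏ i, Tf i with hB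
  set C := ∏ p : ι × ι, Tle p with hC
  set T := A * B * C with hTdef
  have hTpos : 0 < T := by
    refine Nat.mul_pos (Nat.mul_pos ?_ ?_) ?_ <;>
      exact Finset.prod_pos (fun i _ => by first | exact hTv i | exact hTf i | exact hTle i)
  have hdvdA : ∀ i : ι, Tv i ∣ T :=
    fun i => ((Finset.dvd_prod_of_mem Tv (Finset.mem_univ i)).trans (dvd_mul_right A B)).trans
      (dvd_mul_right (A * B) C)
  have hdvdB : ∀ i : ι, Tf i ∣ T :=
    fun i => ((Finset.dvd_prod_of_mem Tf (Finset.mem_univ i)).trans (dvd_mul_left B A)).trans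
      (dvd_mul_right (A * B) C)
  have hdvdC : ∀ p : ι × ι, Tle p ∣ T :=
    fun p => (Finset.dvd_prod_of_mem Tle (Finset.mem_univ p)).trans (dvd_mul_left C (A * B))
  have hvT : ∀ i, PCRW T (vals i) := fun i => (hv' i).mono (hdvdA i)
  have hfT : ∀ i, EvCW T (feas i) := fun i => (hf' i).mono (hdvdB i)
  have hleT : ∀ p : ι × ι, EvCW T (fun n => vals p.1 n ≤ vals p.2 n) :=
    fun p => (hle' p).mono (hdvdC p)
  refine ⟨T, hTpos, fun b => ?_⟩
  by_cases hbT : T ≤ b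
  · exact ⟨0, 1, 0, fun n _ hb => absurd hb (by have := Nat.mod_lt n hTpos; omega)⟩
  push_neg at hbT
  set F : Finset ι := Finset.univ.filter (fun i => ∃ N, ∀ n, N ≤ n → n % T = b → feas i n)
    with hF
  have hdec : ∀ i : ι, ∃ N, ∀ n, N ≤ n → n % T = b → (feas i n ↔ i ∈ F) := by
    intro i
    by_cases hiF : i ∈ F
    · obtain ⟨N, hN⟩ := (Finset.mem_filter.1 hiF).2
      exact ⟨N, fun n hn hb => ⟨fun _ => hiF, fun _ => hN n hn hb⟩⟩
    · rcases hfT i b with htrue | ⟨N, hN⟩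
      · exact absurd (Finset.mem_filter.2 ⟨Finset.mem_univ i, htrue⟩) hiF
      · exact ⟨N, fun n hn hb => ⟨fun hfn => absurd hfn (hN n hn hb),
          fun hi => absurd hi hiF⟩⟩
  choose Nd hNd using hdec
  set N₁ := N₀ ⊔ Finset.univ.sup Nd with hN₁
  have hNdle : ∀ i : ι, Nd i ≤ N₁ :=
    fun i => le_trans (Finset.le_sup (Finset.mem_univ i)) (le_max_right _ _)
  have hN₀le : N₀ ≤ N₁ := le_max_left _ _
  -- the class `b` contains arbitrarily large members
  have hclass : ∀ k : ℕ, ∃ n, k ≤ n ∧ n % T = b := by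
    intro k
    refine ⟨b + T * (k + 1), ?_, ?_⟩
    · have : k + 1 ≤ T * (k + 1) := Nat.le_mul_of_pos_left _ hTpos
      omega
    · rw [Nat.add_mul_mod_self_left, Nat.mod_eq_of_lt hbT]
  have hFne : F.Nonempty := by
    obtain ⟨n, hkn, hnb⟩ := hclass N₁
    obtain ⟨iw, hiw, _⟩ := hmem n (le_trans hN₀le hkn)
    exact ⟨iw, (hNd iw n (le_trans (hNdle iw) hkn) hnb).1 hiw⟩
  set rel : ι → ι → Prop := fun i j => ∃ N, ∀ n, N ≤ n → n % T = b → vals i n ≤ vals j n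
    with hrel
  have htot : ∀ i j, rel i j ∨ rel j i := by
    intro i j
    rcases hleT (i, j) b with ⟨N, hN⟩ | ⟨N, hN⟩
    · exact Or.inl ⟨N, hN⟩
    · exact Or.inr ⟨N, fun n hn hb => (not_le.1 (hN n hn hb)).le⟩
  have htrans : ∀ {i j k}, rel i j → rel j k → rel i k := by
    rintro i j k ⟨M1, h1⟩ ⟨M2, h2⟩
    exact ⟨M1 ⊔ M2, fun n hn hb => le_trans (h1 n (by omega) hb) (h2 n (by omega) hb)⟩
  obtain ⟨istar, hiF, hmin⟩ := exists_rel_min rel htot htrans F hFne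
  have hminN : ∀ j : ι, ∃ N, ∀ n, N ≤ n → n % T = b → j ∈ F → vals istar n ≤ vals j n := by
    intro j
    by_cases hj : j ∈ F
    · obtain ⟨N, hN⟩ := hmin j hj
      exact ⟨N, fun n hn hb _ => hN n hn hb⟩
    · exact ⟨0, fun n _ _ hjF => absurd hjF hj⟩
  choose Nr hNr using hminN
  obtain ⟨P, Q, N₂, hPQ⟩ := hvT istar b
  refine ⟨P, Q, N₁ ⊔ N₂ ⊔ Finset.univ.sup Nr, fun n hn hb => ?_⟩
  have hn₁ : N₁ ≤ n := by omega
  have hn₀ : N₀ ≤ n := le_trans hN₀le hn₁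
  have hμn : μ n = vals istar n := by
    have hfi : feas istar n := (hNd istar n (le_trans (hNdle istar) hn₁) hb).2 hiF
    have h1 : μ n ≤ vals istar n := hlb n hn₀ istar hfi
    obtain ⟨j, hj, hμj⟩ := hmem n hn₀
    have hjF : j ∈ F := (hNd j n (le_trans (hNdle j) hn₁) hb).1 hj
    have hNrj : Nr j ≤ n :=
      le_trans (le_trans (Finset.le_sup (Finset.mem_univ j)) (le_max_right _ _)) hn
    have h2 : vals istar n ≤ vals j n := hNr j n hNrj hb hjF
    rw [hμj]
    exact le_antisymm (hμj ▸ h1) h2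
  obtain ⟨hQ, hval⟩ := hPQ n (by omega) hb
  exact ⟨hQ, by rw [hμn, hval]⟩

theorem EQR_to_PCR {f : ℕ → ℝ} (h : IsEventuallyQR f) : PCR f := by
  obtain ⟨p, q, ⟨πp, hπp, Pp, hPp⟩, ⟨πq, hπq, Pq, hPq⟩, N, hN⟩ := h
  refine ⟨πp * πq, Nat.mul_pos hπp hπq, fun b => ⟨Pp (b % πp), Pq (b % πq), N,
    fun n hn hb => ?_⟩⟩
  have h1 : n % πp = b % πp := by rw [← hb, Nat.mod_mod_of_dvd _ (dvd_mul_right _ _)]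
  have h2 : n % πq = b % πq := by rw [← hb, Nat.mod_mod_of_dvd _ (dvd_mul_left _ _)]
  obtain ⟨hq0, hfn⟩ := hN n hn
  rw [← h1, ← h2, ← hPp, ← hPq]
  exact ⟨hq0, hfn⟩

theorem PCR_to_EQR {f : ℕ → ℝ} (h : PCR f) : IsEventuallyQR f := by
  obtain ⟨T, hT, h⟩ := h
  choose P Q N hPQ using h
  refine ⟨fun n => (P (n % T)).eval (n : ℤ), fun n => (Q (n % T)).eval (n : ℤ),
    ⟨T, hT, P, fun n => rfl⟩, ⟨T, hT, Q, fun n => rfl⟩, (Finset.range T).sup N,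
    fun n hn => ?_⟩
  have hb : n % T < T := Nat.mod_lt _ hT
  have : N (n % T) ≤ n := le_trans (Finset.le_sup (Finset.mem_range.2 hb)) hn
  exact hPQ (n % T) n this rfl
open Matrix in
theorem gram_det_ne_zero {e : ℕ} {ι : Type*} [Fintype ι] [DecidableEq ι]
    (A : Matrix (Fin e) ι ℝ)
    (h : LinearIndependent ℝ (fun j : ι => fun k => A k j)) : (Aᵀ * A).det ≠ 0 := by
  intro h0
  obtain ⟨x, hx0, hxv⟩ := Matrix.exists_mulVec_eq_zero_iff.2 h0
  have hAx : A.mulVec x = 0 := by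
    have h1 : x ⬝ᵥ ((Aᵀ * A).mulVec x) = 0 := by rw [hxv]; simp [dotProduct]
    rw [← Matrix.mulVec_mulVec, Matrix.dotProduct_mulVec, Matrix.vecMul_transpose] at h1
    simp only [dotProduct] at h1
    funext k
    have := (Finset.sum_eq_zero_iff_of_nonneg
      (fun i _ => mul_self_nonneg (A.mulVec x i))).1 h1 k (Finset.mem_univ k)
    have := mul_self_eq_zero.1 this
    simpa using this
  have hsum0 : (∑ j, x j • fun k => A k j) = 0 := by
    funext k
    simp only [Finset.sum_apply, Pi.smul_apply, smul_eq_mul, Pi.zero_apply]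
    have hk : (A.mulVec x) k = 0 := by rw [hAx]; rfl
    rw [Matrix.mulVec] at hk
    simp only [dotProduct] at hk
    rw [← hk]
    exact Finset.sum_congr rfl (fun j _ => mul_comm _ _)
  have hlin := Fintype.linearIndependent_iff.1 h x hsum0
  exact hx0 (funext fun j => hlin j)

open Matrix in
theorem cramer_solution {e : ℕ} {ι : Type*} [Fintype ι] [DecidableEq ι]
    (A : Matrix (Fin e) ι ℝ) (c : ι → ℝ) (w : Fin e → ℝ) (hw : A.mulVec c = w) :
    (Aᵀ * A).adjugate.mulVec (Aᵀ.mulVec w) = (Aᵀ * A).det • c := by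
  rw [← hw, Matrix.mulVec_mulVec, Matrix.mulVec_mulVec, Matrix.mul_assoc,
    Matrix.adjugate_mul, Matrix.smul_mulVec, Matrix.one_mulVec]

open Matrix in
/-- If the minimum of a piecewise-linear concave objective over the standard-form
polyhedron is attained, it is attained at a point whose support indexes linearly
independent columns. -/
theorem lp_support {e r mm : ℕ} (M : Matrix (Fin e) (Fin r) ℝ) (w : Fin e → ℝ)
    (g : Fin (mm + 1) → Fin r → ℝ) (μ : ℝ)
    (hmem : ∃ c : Fin r → ℝ, (∀ j, 0 ≤ c j) ∧ M.mulVec c = w ∧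
      Finset.univ.inf' Finset.univ_nonempty (fun i => g i ⬝ᵥ c) = μ)
    (hlb : ∀ c : Fin r → ℝ, (∀ j, 0 ≤ c j) → M.mulVec c = w →
      μ ≤ Finset.univ.inf' Finset.univ_nonempty (fun i => g i ⬝ᵥ c)) :
    ∃ (i : Fin (mm + 1)) (c : Fin r → ℝ), (∀ j, 0 ≤ c j) ∧ M.mulVec c = w ∧
      g i ⬝ᵥ c = μ ∧
      LinearIndependent ℝ (fun j : {j : Fin r // c j ≠ 0} => fun k => M k (j : Fin r)) := by
  classical
  obtain ⟨c₀, hc₀, hMc₀, hinf₀⟩ := hmem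
  obtain ⟨i₀, _, hi₀⟩ := Finset.exists_mem_eq_inf' Finset.univ_nonempty (fun i => g i ⬝ᵥ c₀)
  suffices haux : ∀ (Nc : ℕ) (c : Fin r → ℝ) (i : Fin (mm + 1)), (∀ j, 0 ≤ c j) →
      M.mulVec c = w → g i ⬝ᵥ c = μ →
      (Finset.univ.filter (fun j => c j ≠ 0)).card ≤ Nc →
      ∃ (i' : Fin (mm + 1)) (c' : Fin r → ℝ), (∀ j, 0 ≤ c' j) ∧ M.mulVec c' = w ∧
        g i' ⬝ᵥ c' = μ ∧
        LinearIndependent ℝ (fun j : {j : Fin r // c' j ≠ 0} => fun k => M k (j : Fin r)) by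
    exact haux r c₀ i₀ hc₀ hMc₀ (by rw [← hi₀, hinf₀])
      (le_trans (Finset.card_filter_le _ _) (by simp))
  intro Nc
  induction Nc with
  | zero =>
    intro c i hc hMc hgc hcard
    have hemp : Finset.univ.filter (fun j => c j ≠ 0) = ∅ := Finset.card_eq_zero.1 (by omega)
    have hzero : ∀ j, c j = 0 := by
      intro j
      by_contra hj
      have : j ∈ Finset.univ.filter (fun j => c j ≠ 0) := Finset.mem_filter.2 ⟨Finset.mem_univ j, hj⟩
      rw [hemp] at this
      exact absurd this (Finset.notMem_empty j)
    have : IsEmpty {j : Fin r // c j ≠ 0} := ⟨fun j => j.2 (hzero j)⟩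
    exact ⟨i, c, hc, hMc, hgc, linearIndependent_empty_type⟩
  | succ Nc ih =>
    intro c i hc hMc hgc hcard
    by_cases hLI : LinearIndependent ℝ (fun j : {j : Fin r // c j ≠ 0} => fun k => M k (j : Fin r))
    · exact ⟨i, c, hc, hMc, hgc, hLI⟩
    obtain ⟨gz, hgz, jnz, hjnz⟩ := Fintype.not_linearIndependent_iff.1 hLI
    -- extend the dependency to a kernel vector supported in the support of `c`,
    -- with a positive entry
    have hzex : ∃ z : Fin r → ℝ, M.mulVec z = 0 ∧ (∀ j, z j ≠ 0 → c j ≠ 0) ∧ (∃ j, 0 < z j) := by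
      set z0 : Fin r → ℝ := fun j => if h : c j ≠ 0 then gz ⟨j, h⟩ else 0 with hz0
      have hsupp0 : ∀ j, z0 j ≠ 0 → c j ≠ 0 := by
        intro j hj
        by_contra hcj
        exact hj (by simp [hz0, hcj])
      have hMz : M.mulVec z0 = 0 := by
        funext k
        have hsum := congrFun hgz k
        simp only [Finset.sum_apply, Pi.smul_apply, smul_eq_mul, Pi.zero_apply] at hsum
        have hmv : M.mulVec z0 k = ∑ j, M k j * z0 j := by
          simp [Matrix.mulVec, dotProduct]
        have e1 : ∑ j : Fin r, M k j * z0 j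
            = ∑ j ∈ Finset.univ.filter (fun j => c j ≠ 0), M k j * z0 j := by
          refine (Finset.sum_subset (Finset.filter_subset _ _) ?_).symm
          intro j _ hj
          have : c j = 0 := by
            by_contra hcj
            exact hj (Finset.mem_filter.2 ⟨Finset.mem_univ j, hcj⟩)
          simp [hz0, this]
        have e2 : ∑ j ∈ Finset.univ.filter (fun j => c j ≠ 0), M k j * z0 j
            = ∑ j : {j : Fin r // c j ≠ 0}, M k j.val * z0 j.val := by
          refine Finset.sum_subtype _ (fun j => ?_) (fun j => M k j * z0 j)
          simp
        show M.mulVec z0 k = 0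
        rw [hmv, e1, e2]
        refine Eq.trans ?_ hsum
        apply Finset.sum_congr rfl
        intro j _
        have hj : z0 j.val = gz j := by simp [hz0, j.prop]
        rw [hj, mul_comm]
      by_cases hpos : ∃ j, 0 < z0 j
      · exact ⟨z0, hMz, hsupp0, hpos⟩
      · push_neg at hpos
        have hjneg : z0 (jnz : Fin r) ≠ 0 := by
          have : z0 (jnz : Fin r) = gz jnz := by simp [hz0, jnz.prop]
          rw [this]; exact hjnz
        refine ⟨-z0, by rw [Matrix.mulVec_neg, hMz, neg_zero], fun j hj => hsupp0 j (by simpa using hj),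
          ⟨jnz, ?_⟩⟩
        have := hpos (jnz : Fin r)
        have : z0 (jnz : Fin r) < 0 := lt_of_le_of_ne this hjneg
        simpa using this
    obtain ⟨z, hMz, hsupp, jp, hjp⟩ := hzex
    -- the objective direction along z vanishes
    have hdot : ∀ s : ℝ, g i ⬝ᵥ (fun j => c j + s * z j) = g i ⬝ᵥ c + s * (g i ⬝ᵥ z) := by
      intro s
      simp only [dotProduct, mul_add, Finset.sum_add_distrib, Finset.mul_sum]
      congr 1
      exact Finset.sum_congr rfl fun x _ => by ring
    have hMpert : ∀ s : ℝ, M.mulVec (fun j => c j + s * z j) = w := by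
      intro s
      have : (fun j => c j + s * z j) = c + s • z := by funext j; simp [mul_comm]
      rw [this, Matrix.mulVec_add, Matrix.mulVec_smul, hMc, hMz, smul_zero, add_zero]
    set tmin := (Finset.univ.filter (fun j => z j ≠ 0)).inf'
      ⟨jp, Finset.mem_filter.2 ⟨Finset.mem_univ jp, hjp.ne'⟩⟩ (fun j => c j / |z j|) with htmin
    have hcpos : ∀ j, z j ≠ 0 → 0 < c j := fun j hj => lt_of_le_of_ne (hc j) (Ne.symm (hsupp j hj))
    have htmin_pos : 0 < tmin := by
      rw [htmin]; refine (Finset.lt_inf'_iff ..).2 ?_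
      intro j hj
      have hjne : z j ≠ 0 := (Finset.mem_filter.1 hj).2
      exact div_pos (hcpos j hjne) (abs_pos.2 hjne)
    have hfeas : ∀ s : ℝ, |s| ≤ tmin → (∀ j, 0 ≤ c j + s * z j) := by
      intro s hs j
      by_cases hzj : z j = 0
      · simp [hzj, hc j]
      · have h1 : tmin ≤ c j / |z j| :=
          Finset.inf'_le _ (Finset.mem_filter.2 ⟨Finset.mem_univ j, hzj⟩)
        have h2 : |s * z j| ≤ c j := by
          rw [abs_mul]
          calc |s| * |z j| ≤ tmin * |z j| := by
                exact mul_le_mul_of_nonneg_right hs (abs_nonneg _)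
            _ ≤ (c j / |z j|) * |z j| := by
                exact mul_le_mul_of_nonneg_right h1 (abs_nonneg _)
            _ = c j := by field_simp
        have := neg_abs_le (s * z j)
        linarith
    have hper : ∀ s : ℝ, |s| ≤ tmin → μ ≤ μ + s * (g i ⬝ᵥ z) := by
      intro s hs
      have h1 := hlb (fun j => c j + s * z j) (hfeas s hs) (hMpert s)
      have h2 : Finset.univ.inf' Finset.univ_nonempty (fun i' => g i' ⬝ᵥ (fun j => c j + s * z j))
          ≤ g i ⬝ᵥ (fun j => c j + s * z j) := Finset.inf'_le _ (Finset.mem_univ i)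
      have h3 := hdot s
      rw [hgc] at h3
      linarith
    have hgiz : g i ⬝ᵥ z = 0 := by
      have h1 := hper tmin (by rw [abs_of_pos htmin_pos])
      have h2 := hper (-tmin) (by rw [abs_neg, abs_of_pos htmin_pos])
      nlinarith
    -- move to the boundary
    set tstar := (Finset.univ.filter (fun j => 0 < z j)).inf'
      ⟨jp, Finset.mem_filter.2 ⟨Finset.mem_univ jp, hjp⟩⟩ (fun j => c j / z j) with htstar
    set c' : Fin r → ℝ := fun j => c j - tstar * z j with hc'def
    have hc' : ∀ j, 0 ≤ c' j := by
      intro j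
      by_cases hzj : 0 < z j
      · have h1 : tstar ≤ c j / z j :=
          Finset.inf'_le _ (Finset.mem_filter.2 ⟨Finset.mem_univ j, hzj⟩)
        have : tstar * z j ≤ c j := by
          rw [div_eq_mul_inv] at h1
          calc tstar * z j ≤ (c j * (z j)⁻¹) * z j := mul_le_mul_of_nonneg_right h1 hzj.le
            _ = c j := by field_simp
        simp only [hc'def]
        linarith
      · push_neg at hzj
        have htstar_pos : 0 < tstar := by
          rw [htstar]; refine (Finset.lt_inf'_iff ..).2 ?_
          intro j' hj'
          have hj'pos : 0 < z j' := (Finset.mem_filter.1 hj').2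
          exact div_pos (hcpos j' hj'pos.ne') hj'pos
        have : 0 ≤ -(tstar * z j) := by nlinarith
        simp only [hc'def]
        linarith [hc j]
    have hMc' : M.mulVec c' = w := by
      have : c' = fun j => c j + (-tstar) * z j := by funext j; simp [hc'def]; ring
      rw [this]
      exact hMpert (-tstar)
    have hgc' : g i ⬝ᵥ c' = μ := by
      have : c' = fun j => c j + (-tstar) * z j := by funext j; simp [hc'def]; ring
      rw [this, hdot, hgiz, hgc]
      ring
    -- support strictly decreases
    obtain ⟨jm, hjm_mem, hjm⟩ := Finset.exists_mem_eq_inf'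
      (⟨jp, Finset.mem_filter.2 ⟨Finset.mem_univ jp, hjp⟩⟩ :
        (Finset.univ.filter (fun j => 0 < z j)).Nonempty) (fun j => c j / z j)
    have hjmz : 0 < z jm := (Finset.mem_filter.1 hjm_mem).2
    have hc'jm : c' jm = 0 := by
      simp only [hc'def, htstar, hjm]
      field_simp
      ring
    have hcjm : c jm ≠ 0 := hsupp jm hjmz.ne'
    have hsub : Finset.univ.filter (fun j => c' j ≠ 0) ⊆ Finset.univ.filter (fun j => c j ≠ 0) := by
      intro j hj
      have hj' : c' j ≠ 0 := (Finset.mem_filter.1 hj).2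
      refine Finset.mem_filter.2 ⟨Finset.mem_univ j, ?_⟩
      by_contra hcj
      have hzj : z j = 0 := by
        by_contra hzj
        exact (hsupp j hzj) hcj
      exact hj' (by simp [hc'def, hcj, hzj])
    have hss : Finset.univ.filter (fun j => c' j ≠ 0) ⊂ Finset.univ.filter (fun j => c j ≠ 0) := by
      refine Finset.ssubset_iff_of_subset hsub |>.2 ?_
      exact ⟨jm, Finset.mem_filter.2 ⟨Finset.mem_univ jm, hcjm⟩,
        fun hmem' => (Finset.mem_filter.1 hmem').2 hc'jm⟩
    have hcard' : (Finset.univ.filter (fun j => c' j ≠ 0)).card ≤ Nc := by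
      have := Finset.card_lt_card hss
      omega
    exact ih c' i hc' hMc' hgc' hcard'
open Matrix in
theorem mulVec_apply_sum {a b : ℕ} (A : Matrix (Fin a) (Fin b) ℝ) (x : Fin b → ℝ) (k : Fin a) :
    A.mulVec x k = ∑ j, A k j * x j := by
  simp [Matrix.mulVec, dotProduct]

open Matrix in
theorem sum_mul_mulVec {a b : ℕ} (f : Fin a → ℝ) (A : Matrix (Fin a) (Fin b) ℝ)
    (c : Fin b → ℝ) :
    ∑ i, f i * (A.mulVec c) i = ∑ j, (∑ i, f i * A i j) * c j := by
  calc ∑ i, f i * (A.mulVec c) i = ∑ i, ∑ j, f i * (A i j * c j) := by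
        refine Finset.sum_congr rfl fun i _ => ?_
        rw [mulVec_apply_sum, Finset.mul_sum]
    _ = ∑ j, ∑ i, f i * (A i j * c j) := Finset.sum_comm
    _ = ∑ j, (∑ i, f i * A i j) * c j := by
        refine Finset.sum_congr rfl fun j _ => ?_
        rw [Finset.sum_mul]
        exact Finset.sum_congr rfl fun i _ => by ring

theorem inf'_sub_const {κ : Type*} (s : Finset κ) (hs : s.Nonempty) (f : κ → ℝ) (a : ℝ) :
    s.inf' hs f - a = s.inf' hs (fun i => f i - a) := by
  apply le_antisymm
  · rw [Finset.le_inf'_iff]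
    intro i hi
    have := Finset.inf'_le f hi
    linarith
  · obtain ⟨i₀, hi₀, he⟩ := Finset.exists_mem_eq_inf' hs f
    have h1 : s.inf' hs (fun i => f i - a) ≤ f i₀ - a := Finset.inf'_le _ hi₀
    rw [he]
    linarith

theorem PCR_det {ι' : Type*} [Fintype ι'] [DecidableEq ι'] (A : ℕ → Matrix ι' ι' ℝ)
    (hA : ∀ i j, PCR (fun n => A n i j)) : PCR (fun n => (A n).det) := by
  have hdet : ∀ n, (A n).det
      = ∑ σ : Equiv.Perm ι', ((Equiv.Perm.sign σ : ℤ) : ℝ) * ∏ i, A n (σ i) i := by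
    intro n
    rw [Matrix.det_apply]
    refine Finset.sum_congr rfl fun σ _ => ?_
    simp [Units.smul_def, zsmul_eq_mul]
  refine PCR.congr (fun n => (hdet n).symm) ?_
  refine PCR_sum Finset.univ _ (fun σ _ => ?_)
  exact (PCR_int ((Equiv.Perm.sign σ : ℤ))).mul (PCR_prod Finset.univ _ (fun i _ => hA (σ i) i))

open Matrix

section Aux

variable {d e r m : ℕ}

/-- The ray matrix. -/
def auxR (u v : Fin r → Fin d → ℤ) (n : ℕ) : Matrix (Fin d) (Fin r) ℝ :=
  Matrix.of fun k j => (u j k : ℝ) + (n : ℝ) * (v j k : ℝ)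

/-- The constraint matrix. -/
def auxM (u v : Fin r → Fin d → ℤ) (dmap : Fin e → Fin d → ℚ) (n : ℕ) :
    Matrix (Fin e) (Fin r) ℝ :=
  Matrix.of fun k j => ∑ l, (dmap k l : ℝ) * auxR u v n l j

/-- The reduced objective row vectors. -/
def auxg (u v : Fin r → Fin d → ℤ) (L : Fin d → ℚ) (coeff : Fin (m + 1) → Fin d → ℕ → ℝ)
    (i : Fin (m + 1)) (n : ℕ) (j : Fin r) : ℝ :=
  ∑ l, (coeff i l n - (L l : ℝ)) * auxR u v n l j

variable (u v : Fin r → Fin d → ℤ) (dmap : Fin e → Fin d → ℚ) (L : Fin d → ℚ)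
  (coeff : Fin (m + 1) → Fin d → ℕ → ℝ) (w : ℕ → Fin e → ℝ)

/-- Columns of the constraint matrix selected by a candidate support. -/
def auxAm (σ : Fin (m + 1) × Finset (Fin r)) (n : ℕ) :
    Matrix (Fin e) {x : Fin r // x ∈ σ.2} ℝ :=
  Matrix.of fun k j => auxM u v dmap n k j.val

def auxGram (σ : Fin (m + 1) × Finset (Fin r)) (n : ℕ) :
    Matrix {x : Fin r // x ∈ σ.2} {x : Fin r // x ∈ σ.2} ℝ :=
  (auxAm u v dmap σ n)ᵀ * auxAm u v dmap σ n

def auxDen (σ : Fin (m + 1) × Finset (Fin r)) (n : ℕ) : ℝ := (auxGram u v dmap σ n).det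

def auxNum (σ : Fin (m + 1) × Finset (Fin r)) (n : ℕ) : {x : Fin r // x ∈ σ.2} → ℝ :=
  (auxGram u v dmap σ n).adjugate.mulVec ((auxAm u v dmap σ n)ᵀ.mulVec (w n))

noncomputable def auxcc (σ : Fin (m + 1) × Finset (Fin r)) (n : ℕ) (j : Fin r) : ℝ :=
  if h : j ∈ σ.2 then auxNum u v dmap w σ n ⟨j, h⟩ / auxDen u v dmap σ n else 0

open Matrix in
noncomputable def auxvals (σ : Fin (m + 1) × Finset (Fin r)) (n : ℕ) : ℝ :=
  auxg u v L coeff σ.1 n ⬝ᵥ auxcc u v dmap w σ n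

def auxfeas (σ : Fin (m + 1) × Finset (Fin r)) (n : ℕ) : Prop :=
  auxDen u v dmap σ n ≠ 0 ∧ (∀ j, 0 ≤ auxcc u v dmap w σ n j) ∧
    (∀ k, (auxM u v dmap n).mulVec (auxcc u v dmap w σ n) k = w n k)

variable (hcoeff : ∀ i j, PCR (coeff i j)) (hwP : ∀ k, PCR (fun n => w n k))

theorem auxR_PCR (l : Fin d) (j : Fin r) : PCR (fun n => auxR u v n l j) :=
  (PCR_linear (v j l) (u j l)).congr (fun n => by simp [auxR]; ring)

theorem auxM_PCR (k : Fin e) (j : Fin r) : PCR (fun n => auxM u v dmap n k j) := by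
  refine PCR.congr (fun n => ?_) (PCR_sum Finset.univ
    (fun l n => (dmap k l : ℝ) * auxR u v n l j) (fun l _ => ?_))
  · simp [auxM]
  · exact (PCR_const _ ⟨dmap k l, rfl⟩).mul (auxR_PCR u v l j)

include hcoeff in
theorem auxg_PCR (i : Fin (m + 1)) (j : Fin r) : PCR (fun n => auxg u v L coeff i n j) := by
  refine PCR.congr (fun n => ?_) (PCR_sum Finset.univ
    (fun l n => (coeff i l n - (L l : ℝ)) * auxR u v n l j) (fun l _ => ?_))
  · simp [auxg]
  · exact (((hcoeff i l).sub (PCR_const _ ⟨L l, rfl⟩)).mul (auxR_PCR u v l j))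

theorem auxGram_PCR (σ : Fin (m + 1) × Finset (Fin r)) (a b : {x : Fin r // x ∈ σ.2}) :
    PCR (fun n => auxGram u v dmap σ n a b) := by
  refine PCR.congr (fun n => ?_) (PCR_sum Finset.univ
    (fun k n => auxM u v dmap n k a.val * auxM u v dmap n k b.val) (fun k _ => ?_))
  · simp [auxGram, auxAm, Matrix.mul_apply, Matrix.transpose_apply]
  · exact (auxM_PCR u v dmap k a.val).mul (auxM_PCR u v dmap k b.val)

theorem auxDen_PCR (σ : Fin (m + 1) × Finset (Fin r)) : PCR (auxDen u v dmap σ) :=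
  PCR_det _ (auxGram_PCR u v dmap σ)

theorem auxAdj_PCR (σ : Fin (m + 1) × Finset (Fin r)) (a b : {x : Fin r // x ∈ σ.2}) :
    PCR (fun n => (auxGram u v dmap σ n).adjugate a b) := by
  refine PCR.congr (fun n => (Matrix.adjugate_apply _ _ _).symm) (PCR_det _ ?_)
  intro i j
  by_cases hib : i = b
  · subst hib
    refine PCR.congr (fun n => ?_)
      (PCR_const (if j = a then (1 : ℝ) else 0) ⟨if j = a then 1 else 0, by split <;> simp⟩)
    rw [Matrix.updateRow_apply, if_pos rfl, Pi.single_apply]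
  · refine PCR.congr (fun n => ?_) (auxGram_PCR u v dmap σ i j)
    rw [Matrix.updateRow_apply, if_neg hib]

include hwP in
theorem auxNum_PCR (σ : Fin (m + 1) × Finset (Fin r)) (a : {x : Fin r // x ∈ σ.2}) :
    PCR (fun n => auxNum u v dmap w σ n a) := by
  have h1 : ∀ n, auxNum u v dmap w σ n a
      = ∑ b : {x : Fin r // x ∈ σ.2}, (auxGram u v dmap σ n).adjugate a b
        * ∑ k, auxM u v dmap n k b.val * w n k := by
    intro n
    simp [auxNum, Matrix.mulVec, dotProduct, auxAm, Matrix.transpose_apply]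
  refine PCR.congr (fun n => (h1 n).symm) ?_
  refine PCR_sum Finset.univ _ (fun b _ => ?_)
  refine (auxAdj_PCR u v dmap σ a b).mul ?_
  refine PCR_sum Finset.univ _ (fun k _ => ?_)
  exact (auxM_PCR u v dmap k b.val).mul (hwP k)

include hwP in
theorem auxcc_PCR (σ : Fin (m + 1) × Finset (Fin r)) (j : Fin r) :
    PCR (fun n => auxcc u v dmap w σ n j) := by
  by_cases hj : j ∈ σ.2
  · refine PCR.congr (fun n => ?_)
      ((auxNum_PCR u v dmap w hwP σ ⟨j, hj⟩).div (auxDen_PCR u v dmap σ))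
    simp [auxcc, hj]
  · refine PCR.congr (fun n => ?_) PCR_zero
    simp [auxcc, hj]

include hcoeff hwP in
theorem auxvals_PCR (σ : Fin (m + 1) × Finset (Fin r)) : PCR (auxvals u v dmap L coeff w σ) := by
  refine PCR.congr (fun n => ?_) (PCR_sum Finset.univ
    (fun l n => auxg u v L coeff σ.1 n l * auxcc u v dmap w σ n l) (fun l _ => ?_))
  · simp [auxvals, dotProduct]
  · exact (auxg_PCR u v L coeff hcoeff σ.1 l).mul (auxcc_PCR u v dmap w hwP σ l)

include hwP in
theorem auxfeas_EvC (σ : Fin (m + 1) × Finset (Fin r)) : EvC (auxfeas u v dmap w σ) := by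
  have h1 : EvC (fun n => auxDen u v dmap σ n ≠ 0) := (auxDen_PCR u v dmap σ).evc_ne_zero
  have h2 : EvC (fun n => ∀ j ∈ Finset.univ, 0 ≤ auxcc u v dmap w σ n j) :=
    EvC_all Finset.univ _ (fun j _ => (auxcc_PCR u v dmap w hwP σ j).evc_nonneg)
  have h3 : EvC (fun n => ∀ k ∈ Finset.univ,
      (auxM u v dmap n).mulVec (auxcc u v dmap w σ n) k = w n k) := by
    refine EvC_all Finset.univ _ (fun k _ => ?_)
    have hP : PCR (fun n => (auxM u v dmap n).mulVec (auxcc u v dmap w σ n) k - w n k) := by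
      refine PCR.sub ?_ (hwP k)
      refine PCR.congr (fun n => (mulVec_apply_sum _ _ _).symm) ?_
      refine PCR_sum Finset.univ _ (fun j _ => ?_)
      exact (auxM_PCR u v dmap k j).mul (auxcc_PCR u v dmap w hwP σ j)
    exact hP.evc_eq_zero.congr (fun n => sub_eq_zero)
  refine ((h1.and h2).and h3).congr (fun n => ?_)
  unfold auxfeas
  simp only [Finset.mem_univ, forall_const, true_implies]
  tauto

end Aux

/-- Quasirationality of scl along a family, abstract polyhedral version.
`K(n)` is the cone on extremal rays with integral linear coordinates
`u_i + n·v_i`; the Klein function `κ_n` of the sail is the minimum of finitely many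
linear functionals whose coefficients are eventually quasirational in `n` (as the
sail has quasipolynomial vertices); `L` is a fixed rational linear functional,
`dmap` a fixed rational linear map, and `w(n)` has integral linear coordinates.
If `μ(n)` is the minimum of `κ_n(y) − L(y)` over the fiber
`{y ∈ K(n) : dmap y = w(n)}`, then `μ` is eventually quasirational. -/
theorem stmt_19 (d e r m : ℕ)
    (u v : Fin r → Fin d → ℤ)
    (K : ℕ → Set (Fin d → ℝ))
    (hK : ∀ n, K n = {x : Fin d → ℝ | ∃ c : Fin r → ℝ, (∀ i, 0 ≤ c i) ∧
      x = ∑ i, c i • (fun j => (u i j : ℝ) + (n : ℝ) * (v i j : ℝ))})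
    (coeff : Fin (m + 1) → Fin d → ℕ → ℝ)
    (hcoeff : ∀ i j, IsEventuallyQR (coeff i j))
    (κ : ℕ → (Fin d → ℝ) → ℝ)
    (hκ : ∀ n (x : Fin d → ℝ),
      κ n x = Finset.univ.inf' Finset.univ_nonempty
        (fun i : Fin (m + 1) => ∑ j, coeff i j n * x j))
    (L : Fin d → ℚ) (dmap : Fin e → Fin d → ℚ)
    (aw bw : Fin e → ℤ) (w : ℕ → Fin e → ℝ)
    (hw : ∀ n j, w n j = (aw j : ℝ) * n + (bw j : ℝ))
    (μ : ℕ → ℝ) (N₀ : ℕ)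
    (hμ : ∀ n ≥ N₀, IsLeast
      {z : ℝ | ∃ y ∈ K n, (∀ j, ∑ i, (dmap j i : ℝ) * y i = w n j) ∧
        z = κ n y - ∑ i, (L i : ℝ) * y i} (μ n)) :
    IsEventuallyQR μ := by
  classical
  have hcoeffP : ∀ i j, PCR (coeff i j) := fun i j => EQR_to_PCR (hcoeff i j)
  have hwP : ∀ k, PCR (fun n => w n k) := fun k =>
    (PCR_linear (aw k) (bw k)).congr (fun n => (hw n k).symm)
  -- translations between `y`-space and `c`-space
  have hy1 : ∀ (n : ℕ) (c : Fin r → ℝ),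
      (∑ i, c i • fun j => (u i j : ℝ) + (n : ℝ) * (v i j : ℝ)) = (auxR u v n).mulVec c := by
    intro n c
    funext k
    simp only [Finset.sum_apply, Pi.smul_apply, smul_eq_mul]
    rw [mulVec_apply_sum]
    refine Finset.sum_congr rfl fun i _ => ?_
    simp only [auxR, Matrix.of_apply]
    ring
  have hy2 : ∀ (n : ℕ) (c : Fin r → ℝ) (k : Fin e),
      (∑ i, (dmap k i : ℝ) * ((auxR u v n).mulVec c) i) = (auxM u v dmap n).mulVec c k := by
    intro n c k
    rw [sum_mul_mulVec, mulVec_apply_sum]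
    refine Finset.sum_congr rfl fun j _ => ?_
    simp [auxM]
  have hy3 : ∀ (n : ℕ) (c : Fin r → ℝ),
      κ n ((auxR u v n).mulVec c) - ∑ i, (L i : ℝ) * ((auxR u v n).mulVec c) i
        = Finset.univ.inf' Finset.univ_nonempty (fun i => auxg u v L coeff i n ⬝ᵥ c) := by
    intro n c
    rw [hκ, inf'_sub_const]
    refine Finset.inf'_congr Finset.univ_nonempty rfl (fun i _ => ?_)
    calc (∑ j, coeff i j n * ((auxR u v n).mulVec c) j)
          - ∑ j, (L j : ℝ) * ((auxR u v n).mulVec c) j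
        = ∑ j, (coeff i j n - (L j : ℝ)) * ((auxR u v n).mulVec c) j := by
          rw [← Finset.sum_sub_distrib]
          exact Finset.sum_congr rfl fun j _ => by ring
      _ = ∑ l, (∑ j, (coeff i j n - (L j : ℝ)) * auxR u v n j l) * c l :=
          sum_mul_mulVec _ _ _
      _ = auxg u v L coeff i n ⬝ᵥ c := by
          simp [auxg, dotProduct]
  -- the value set in `c`-coordinates
  have hset : ∀ n, {z : ℝ | ∃ y ∈ K n, (∀ j, ∑ i, (dmap j i : ℝ) * y i = w n j) ∧
        z = κ n y - ∑ i, (L i : ℝ) * y i}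
      = {z : ℝ | ∃ c : Fin r → ℝ, (∀ j, 0 ≤ c j) ∧ (auxM u v dmap n).mulVec c = w n ∧
        z = Finset.univ.inf' Finset.univ_nonempty (fun i => auxg u v L coeff i n ⬝ᵥ c)} := by
    intro n
    ext z
    simp only [Set.mem_setOf_eq, hK n]
    constructor
    · rintro ⟨y, ⟨c, hc0, rfl⟩, hcon, rfl⟩
      rw [hy1 n c] at hcon ⊢
      refine ⟨c, hc0, funext (fun k => ?_), ?_⟩
      · rw [← hy2 n c k]
        exact hcon k
      · exact hy3 n c
    · rintro ⟨c, hc0, hMc, rfl⟩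
      refine ⟨(auxR u v n).mulVec c, ⟨c, hc0, (hy1 n c).symm⟩, fun k => ?_, ?_⟩
      · rw [hy2 n c k, hMc]
      · exact (hy3 n c).symm
  have hμ' : ∀ n, N₀ ≤ n → IsLeast {z : ℝ | ∃ c : Fin r → ℝ, (∀ j, 0 ≤ c j) ∧
      (auxM u v dmap n).mulVec c = w n ∧
      z = Finset.univ.inf' Finset.univ_nonempty (fun i => auxg u v L coeff i n ⬝ᵥ c)}
      (μ n) := by
    intro n hn
    have := hμ n hn
    rwa [hset n] at this
  -- membership: μ n is one of the candidate values, feasibly so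
  have hmem : ∀ n, N₀ ≤ n → ∃ σ, auxfeas u v dmap w σ n ∧
      μ n = auxvals u v dmap L coeff w σ n := by
    intro n hn
    obtain ⟨hmem₀, hlb₀⟩ := hμ' n hn
    obtain ⟨c₀, hc₀, hMc₀, hz₀⟩ := hmem₀
    obtain ⟨i, c, hc, hMc, hgc, hLI⟩ := lp_support (auxM u v dmap n) (w n)
      (fun i => auxg u v L coeff i n) (μ n)
      ⟨c₀, hc₀, hMc₀, hz₀.symm⟩
      (fun c' hc' hMc' => hlb₀ ⟨c', hc', hMc', rfl⟩)
    set S : Finset (Fin r) := Finset.univ.filter (fun j => c j ≠ 0) with hS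
    have hiff : ∀ x : Fin r, x ∈ S ↔ c x ≠ 0 := fun x => by simp [hS]
    have hLI' : LinearIndependent ℝ
        (fun j : {x : Fin r // x ∈ S} => fun k => auxM u v dmap n k j.val) := by
      have hcomp : (fun j : {x : Fin r // x ∈ S} => fun k => auxM u v dmap n k j.val)
          = (fun j : {x : Fin r // c x ≠ 0} => fun k => auxM u v dmap n k j.val)
            ∘ (Equiv.subtypeEquivRight hiff) := rfl
      rw [hcomp]
      exact (linearIndependent_equiv _).2 hLI
    have hDen : auxDen u v dmap (i, S) n ≠ 0 := gram_det_ne_zero (auxAm u v dmap (i, S) n) hLI'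
    set cS : {x : Fin r // x ∈ S} → ℝ := fun j => c j.val with hcS
    have hAcS : (auxAm u v dmap (i, S) n).mulVec cS = w n := by
      funext k
      have h1 : (auxAm u v dmap (i, S) n).mulVec cS k
          = ∑ j : {x : Fin r // x ∈ S}, auxM u v dmap n k j.val * c j.val := by
        simp [Matrix.mulVec, dotProduct, auxAm, hcS]
      have h2 : ∑ j : {x : Fin r // x ∈ S}, auxM u v dmap n k j.val * c j.val
          = ∑ j ∈ S, auxM u v dmap n k j * c j :=
        (Finset.sum_subtype S (fun j => Iff.rfl) (fun j => auxM u v dmap n k j * c j)).symm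
      have h3 : ∑ j ∈ S, auxM u v dmap n k j * c j
          = ∑ j : Fin r, auxM u v dmap n k j * c j := by
        refine Finset.sum_subset (Finset.subset_univ S) ?_
        intro j _ hj
        have hcj : c j = 0 := by
          by_contra hcj
          exact hj ((hiff j).2 hcj)
        simp [hcj]
      rw [h1, h2, h3, ← mulVec_apply_sum, hMc]
    have hcram := cramer_solution (auxAm u v dmap (i, S) n) cS (w n) hAcS
    have hccc : auxcc u v dmap w (i, S) n = c := by
      funext j
      by_cases hj : j ∈ S
      · have hnum : auxNum u v dmap w (i, S) n ⟨j, hj⟩ = auxDen u v dmap (i, S) n * c j := by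
          have := congrFun hcram ⟨j, hj⟩
          simpa [auxNum, auxDen, auxGram, hcS, Pi.smul_apply, smul_eq_mul] using this
        simp only [auxcc, dif_pos hj, hnum]
        field_simp
      · have hcj : c j = 0 := by
          by_contra hcj
          exact hj ((hiff j).2 hcj)
        simp [auxcc, hj, hcj]
    refine ⟨(i, S), ⟨hDen, ?_, ?_⟩, ?_⟩
    · intro j
      rw [hccc]
      exact hc j
    · intro k
      rw [hccc, hMc]
    · show μ n = auxg u v L coeff i n ⬝ᵥ auxcc u v dmap w (i, S) n
      rw [hccc]
      exact hgc.symm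
  -- lower bound: μ n is below every feasible candidate value
  have hlbσ : ∀ n, N₀ ≤ n → ∀ σ, auxfeas u v dmap w σ n →
      μ n ≤ auxvals u v dmap L coeff w σ n := by
    rintro n hn σ ⟨hDen, hcc0, hccM⟩
    obtain ⟨hmem₀, hlb₀⟩ := hμ' n hn
    have h1 : μ n ≤ Finset.univ.inf' Finset.univ_nonempty
        (fun i => auxg u v L coeff i n ⬝ᵥ auxcc u v dmap w σ n) :=
      hlb₀ ⟨auxcc u v dmap w σ n, hcc0, funext hccM, rfl⟩
    exact le_trans h1 (Finset.inf'_le _ (Finset.mem_univ σ.1))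
  exact PCR_to_EQR (master_min (auxvals u v dmap L coeff w) (auxfeas u v dmap w)
    (auxvals_PCR u v dmap L coeff w hcoeffP hwP) (auxfeas_EvC u v dmap w hwP) μ N₀ hmem hlbσ)
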